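/- Let q = 2^m with m ≥ 2. Then the following are equivalent: (i) for every α in F_q \ {0, 1}, x^{q-1} - α is stable over F_q; (ii) for every α in F_q \ {0, 1}, x^{q-1} - α is irreducible over F_q; (iii) q - 1 is prime (a Mersenne prime). -/

import Mathlib

open Polynomial IntermediateField

section Aux

lemma charF2 {F : Type*} [Field F] [Fintype F] {m : ℕ} (hm : 1 ≤ m)
    (hF : Fintype.card F = 2 ^ m) : CharP F 2 := by
  have hcast : ((2 : ℕ) ^ m : F) = 0 := by
    have := FiniteField.cast_card_eq_zero F
    rw [hF] at this
    push_cast at this ⊢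
    exact this
  have h2 : ((2 : ℕ) : F) = 0 := by
    push_cast at hcast
    exact pow_eq_zero_iff (by omega) |>.mp hcast
  have hdvd : ringChar F ∣ 2 := (ringChar.spec F 2).mp h2
  have hne1 : ringChar F ≠ 1 := CharP.ringChar_ne_one
  have : ringChar F = 2 := by
    rcases (Nat.dvd_prime Nat.prime_two).mp hdvd with h | h
    · exact absurd h hne1
    · exact h
  exact this ▸ ringChar.charP F

lemma geom_nat (e D : ℕ) : e * (∑ i ∈ Finset.range D, (e + 1) ^ i) + 1 = (e + 1) ^ D := by
  induction D with
  | zero => simp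
  | succ D ih =>
    rw [Finset.sum_range_succ, pow_succ]
    calc e * ((∑ i ∈ Finset.range D, (e + 1) ^ i) + (e + 1) ^ D) + 1
        = (e * (∑ i ∈ Finset.range D, (e + 1) ^ i) + 1) + e * (e + 1) ^ D := by ring
      _ = (e + 1) ^ D + e * (e + 1) ^ D := by rw [ih]
      _ = (e + 1) ^ D * (e + 1) := by ring

lemma crux {F : Type*} [Field F] [Fintype F] {m : ℕ} (hm : 2 ≤ m)
    (hF : Fintype.card F = 2 ^ m) (hp : Nat.Prime (2 ^ m - 1))
    {α : F} (hα0 : α ≠ 0) (hα1 : α ≠ 1)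
    {K : Type*} [Field K] [Algebra F K] [FiniteDimensional F K]
    {g : F[X]} (hgm : g.Monic) (hgi : Irreducible g)
    (heval : g.eval α = 1 - α)
    {b0 : K} (hb0 : aeval b0 g = 0)
    (hrank : Module.finrank F K = g.natDegree) :
    Irreducible (X ^ (2 ^ m - 1) - C (b0 + algebraMap F K α) : K[X]) := by
  classical
  have h4 : 4 ≤ 2 ^ m := by
    calc (4 : ℕ) = 2 ^ 2 := rfl
      _ ≤ 2 ^ m := Nat.pow_le_pow_right (by norm_num) hm
  haveI hA2 : Fact (Nat.Prime 2) := ⟨Nat.prime_two⟩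
  haveI hchF : CharP F 2 := charF2 (by omega) hF
  haveI hchK : CharP K 2 := charP_of_injective_algebraMap (algebraMap F K).injective 2
  haveI : ExpChar K 2 := .prime Nat.prime_two
  haveI : Finite K := Module.finite_of_finite F
  haveI : Fintype K := Fintype.ofFinite K
  set q : ℕ := 2 ^ m with hq
  set D : ℕ := g.natDegree with hD
  have hD0 : 0 < D := hgi.natDegree_pos
  have cardK : Fintype.card K = q ^ D := by
    rw [Module.card_eq_pow_finrank (K := F) (V := K), hF, hrank]
  set φ := algebraMap F K with hφ
  have hfix : ∀ (i : ℕ) (x : F), (φ x) ^ q ^ i = φ x := by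
    intro i x
    rw [← map_pow]
    congr 1
    have := FiniteField.pow_card_pow (K := F) i x
    rwa [hF] at this
  have hqpow : ∀ i : ℕ, q ^ i = 2 ^ (m * i) := fun i => by rw [hq, pow_mul]
  have hσx : ∀ (i : ℕ) (x : K), iterateFrobenius K 2 (m * i) x = x ^ q ^ i := by
    intro i x
    rw [iterateFrobenius_def, ← hqpow]
  have hconj : ∀ i : ℕ, aeval (b0 ^ q ^ i) g = 0 := by
    intro i
    set σ : K →+* K := iterateFrobenius K 2 (m * i) with hσdef
    have hcomp : σ.comp (algebraMap F K) = algebraMap F K := by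
      ext x; rw [RingHom.comp_apply, hσdef, hσx, hfix]
    calc aeval (b0 ^ q ^ i) g = eval₂ φ (σ b0) g := by rw [aeval_def, hσdef, hσx]
      _ = σ (eval₂ φ b0 g) := by rw [hom_eval₂, hcomp]
      _ = 0 := by rw [← aeval_def, hb0, map_zero]
  -- distinctness of conjugates
  have hinj : ∀ i j, i < D → j < D → b0 ^ q ^ i = b0 ^ q ^ j → i = j := by
    suffices H : ∀ i j, i < j → j < D → b0 ^ q ^ i ≠ b0 ^ q ^ j by
      intro i j hi hj hij
      rcases lt_trichotomy i j with h | h | h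
      · exact absurd hij (H i j h hj)
      · exact h
      · exact absurd hij.symm (H j i h hi)
    intro i j hij hjD heq
    set k := i + (D - j) with hk
    have hk0 : 0 < k := by omega
    have hkD : k < D := by omega
    have hDj : b0 ^ q ^ k = b0 := by
      have h1 : b0 ^ q ^ (i + (D - j)) = b0 ^ q ^ (j + (D - j)) := by
        rw [pow_add, pow_add, pow_mul, pow_mul, heq]
      rw [hk, h1, show j + (D - j) = D from by omega, ← cardK, FiniteField.pow_card]
    -- Frobenius x ↦ x^{q^k} is the identity on K
    have hcommutes : ∀ x : F, (iterateFrobenius K 2 (m * k)) (φ x) = φ x := by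
      intro x; rw [hσx, hfix]
    set σA : K →ₐ[F] K :=
      { toRingHom := iterateFrobenius K 2 (m * k), commutes' := hcommutes } with hσA
    have hint : IsIntegral F b0 := ⟨g, hgm, hb0⟩
    have hmin : minpoly F b0 = g := (minpoly.eq_of_irreducible_of_monic hgi hb0 hgm).symm
    have htop : IntermediateField.adjoin F {b0} = ⊤ := by
      apply IntermediateField.eq_of_le_of_finrank_eq le_top
      rw [IntermediateField.adjoin.finrank hint, hmin, IntermediateField.finrank_top', hrank]
    have htopA : Algebra.adjoin F {b0} = ⊤ := by
      rw [← IntermediateField.adjoin_simple_toSubalgebra_of_isAlgebraic hint.isAlgebraic, htop,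
        IntermediateField.top_toSubalgebra]
    have hσb0 : σA b0 = b0 := by
      show (iterateFrobenius K 2 (m * k)) b0 = b0
      rw [hσx, hDj]
    have hσAx : ∀ x : K, σA x = x ^ q ^ k := fun x => hσx k x
    have hall : ∀ x : K, x ^ q ^ k = x := by
      have hle : Algebra.adjoin F {b0} ≤ AlgHom.equalizer σA (AlgHom.id F K) := by
        apply Algebra.adjoin_le
        intro x hx
        rw [Set.mem_singleton_iff] at hx
        subst hx
        show σA x = x
        exact hσb0
      intro x
      have hx : x ∈ Algebra.adjoin F {b0} := htopA.symm ▸ Algebra.mem_top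
      have h2 : σA x = x := hle hx
      rw [← hσAx x, h2]
    obtain ⟨ζ, hζ⟩ := IsCyclic.exists_generator (α := Kˣ)
    have hordζ : orderOf ζ = q ^ D - 1 := by
      rw [orderOf_eq_card_of_forall_mem_zpowers hζ, Nat.card_eq_fintype_card,
        Fintype.card_units, cardK]
    have hζk : ζ ^ q ^ k = ζ := by
      ext
      rw [Units.val_pow_eq_pow_val]
      exact hall _
    have hζ1 : ζ ^ (q ^ k - 1) = 1 := by
      have hq1 : 1 ≤ q ^ k := Nat.one_le_pow _ _ (by omega)
      have h2 : ζ ^ (q ^ k - 1 + 1) = ζ ^ 1 := by rw [Nat.sub_add_cancel hq1, hζk, pow_one]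
      rw [pow_succ, pow_one] at h2
      exact mul_right_cancel (h2.trans (one_mul ζ).symm)
    have hdvd := orderOf_dvd_of_pow_eq_one hζ1
    rw [hordζ] at hdvd
    have hqk1 : 0 < q ^ k - 1 := by
      have : q ^ 1 ≤ q ^ k := Nat.pow_le_pow_right (by omega) hk0
      simp only [pow_one] at this
      omega
    have hle2 := Nat.le_of_dvd hqk1 hdvd
    have hlt : q ^ k < q ^ D := Nat.pow_lt_pow_right (by omega) hkD
    have hpos : 0 < q ^ D := pow_pos (by omega) D
    omega
  -- splitting of g over K
  set r : ℕ → K := fun i => b0 ^ q ^ i with hr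
  set Pr : K[X] := ∏ i ∈ Finset.range D, (X - C (r i)) with hPrdef
  have hPrm : Pr.Monic := monic_prod_of_monic _ _ fun i _ => monic_X_sub_C _
  have hPrd : Pr.natDegree = D := by
    rw [hPrdef, natDegree_prod _ _ fun i _ => X_sub_C_ne_zero (r i)]
    simp
  have hmapne : g.map φ ≠ 0 := (hgm.map φ).ne_zero
  have hnodup : ((Finset.range D).val.map r).Nodup := by
    refine Multiset.Nodup.map_on ?_ (Finset.range D).nodup
    intro i hi j hj hij
    exact hinj i j (Finset.mem_range.mp hi) (Finset.mem_range.mp hj) hij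
  have hM : ((Finset.range D).val.map r) ≤ (g.map φ).roots := by
    rw [Multiset.le_iff_count]
    intro a
    by_cases ha : a ∈ (Finset.range D).val.map r
    · have hcount : ((Finset.range D).val.map r).count a = 1 :=
        Multiset.count_eq_one_of_mem hnodup ha
      rw [hcount]
      obtain ⟨i, hi, rfl⟩ := Multiset.mem_map.mp ha
      refine Multiset.one_le_count_iff_mem.mpr ?_
      rw [mem_roots hmapne]
      show IsRoot _ _
      rw [IsRoot.def, eval_map, ← aeval_def]
      exact hconj i
    · rw [Multiset.count_eq_zero_of_notMem ha]
      exact Nat.zero_le _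
  have hdvd2 : Pr ∣ g.map φ := by
    have h1 : Pr = (((Finset.range D).val.map r).map fun a => X - C a).prod := by
      rw [hPrdef, Multiset.map_map]
      rfl
    rw [h1]
    exact dvd_trans (Multiset.prod_dvd_prod_of_le (Multiset.map_le_map hM))
      (prod_multiset_X_sub_C_dvd _)
  have hsplit : g.map φ = Pr := by
    symm
    apply eq_of_dvd_of_natDegree_le_of_leadingCoeff hdvd2
    · rw [hPrd, hgm.natDegree_map φ]
    · rw [hPrm.leadingCoeff, (hgm.map φ).leadingCoeff]
  -- key norm identity
  have hkey : (b0 + φ α) ^ (∑ i ∈ Finset.range D, q ^ i) = φ (g.eval α) := by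
    rw [← Finset.prod_pow_eq_pow_sum]
    have h1 : ∀ i ∈ Finset.range D, (b0 + φ α) ^ q ^ i = r i + φ α := by
      intro i _
      rw [hqpow, add_pow_char_pow, ← hqpow, hfix, hr]
    rw [Finset.prod_congr rfl h1]
    have h2 : φ (g.eval α) = eval (φ α) (g.map φ) := by
      rw [eval_map, eval₂_at_apply]
    rw [h2, hsplit, hPrdef, eval_prod]
    apply Finset.prod_congr rfl
    intro i _
    rw [eval_sub, eval_X, eval_C, CharTwo.sub_eq_add, add_comm]
  -- conclude via the prime criterion
  apply X_pow_sub_C_irreducible_of_prime hp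
  intro b hb
  have hc0 : b0 + φ α ≠ 0 := by
    intro h0
    have hb0' : b0 = φ α := by
      have h1 : b0 = -φ α := eq_neg_of_add_eq_zero_left h0
      rwa [CharTwo.neg_eq] at h1
    rw [hb0', hφ, aeval_algebraMap_apply_eq_algebraMap_eval] at hb0
    have h3 : g.eval α = 0 := by
      have := (algebraMap F K).injective (hb0.trans (map_zero (algebraMap F K)).symm)
      exact this
    rw [heval] at h3
    exact hα1 (by linear_combination -h3)
  have hbne : b ≠ 0 := by
    rintro rfl
    rw [zero_pow (by omega)] at hb
    exact hc0 hb.symm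
  have hsum : (2 ^ m - 1) * (∑ i ∈ Finset.range D, q ^ i) = q ^ D - 1 := by
    have hg := geom_nat (2 ^ m - 1) D
    rw [show 2 ^ m - 1 + 1 = q from by omega] at hg
    omega
  have h1 : φ (g.eval α) = 1 := by
    rw [← hkey, ← hb, ← pow_mul, hsum, ← cardK, FiniteField.pow_card_sub_one_eq_one b hbne]
  rw [heval] at h1
  have h2 : (1 : F) - α = 1 := by
    apply (algebraMap F K).injective
    rw [← hφ, h1, map_one]
  exact hα0 (by linear_combination -h2)

set_option maxHeartbeats 1000000 in
set_option synthInstance.maxHeartbeats 400000 in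
lemma step {F : Type*} [Field F] [Fintype F] {m : ℕ} (hm : 2 ≤ m)
    (hF : Fintype.card F = 2 ^ m) (hp : Nat.Prime (2 ^ m - 1))
    {α : F} (hα0 : α ≠ 0) (hα1 : α ≠ 1)
    {g : F[X]} (hgm : g.Monic) (hgi : Irreducible g)
    (heval : g.eval α = 1 - α) :
    Irreducible (g.comp (X ^ (2 ^ m - 1) - C α)) := by
  classical
  have h4 : 4 ≤ 2 ^ m := by
    calc (4 : ℕ) = 2 ^ 2 := rfl
      _ ≤ 2 ^ m := Nat.pow_le_pow_right (by norm_num) hm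
  set d : ℕ := 2 ^ m - 1 with hd
  have hd0 : d ≠ 0 := by omega
  set f : F[X] := X ^ d - C α with hfdef
  have hfm : f.Monic := monic_X_pow_sub_C α hd0
  have hfd : f.natDegree = d := natDegree_X_pow_sub_C
  have hcm : (g.comp f).Monic := hgm.comp hfm (by rw [hfd]; exact hd0)
  have hcd : (g.comp f).natDegree = g.natDegree * d := by rw [natDegree_comp, hfd]
  have hD0 : 0 < g.natDegree := hgi.natDegree_pos
  set Ω := AlgebraicClosure F with hΩ
  have hdegmap : ((g.comp f).map (algebraMap F Ω)).degree ≠ 0 := by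
    rw [degree_map]
    rw [degree_eq_natDegree hcm.ne_zero, hcd]
    simp only [ne_eq, Nat.cast_eq_zero]
    positivity
  obtain ⟨γ, hγ⟩ := IsAlgClosed.exists_root _ hdegmap
  have hγ0 : aeval γ (g.comp f) = 0 := by
    rw [aeval_def, ← eval_map]
    exact hγ
  have hγint : IsIntegral F γ := ⟨g.comp f, hcm, hγ0⟩
  haveI : FiniteDimensional F ↥F⟮γ⟯ := IntermediateField.adjoin.finiteDimensional hγint
  set γ' : ↥F⟮γ⟯ := IntermediateField.AdjoinSimple.gen F γ with hγ'def
  have hcoeγ : algebraMap ↥F⟮γ⟯ Ω γ' = γ := IntermediateField.AdjoinSimple.algebraMap_gen F γ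
  have hγ'0 : aeval γ' (g.comp f) = 0 := by
    apply (algebraMap ↥F⟮γ⟯ Ω).injective
    rw [map_zero]
    have h := aeval_algHom_apply (IsScalarTower.toAlgHom F ↥F⟮γ⟯ Ω) γ' (g.comp f)
    rw [show ((IsScalarTower.toAlgHom F ↥F⟮γ⟯ Ω) γ' : Ω) = γ from hcoeγ] at h
    calc (algebraMap (↥F⟮γ⟯) Ω) ((aeval γ') (g.comp f))
        = (IsScalarTower.toAlgHom F (↥F⟮γ⟯) Ω) ((aeval γ') (g.comp f)) := rfl
      _ = (aeval γ) (g.comp f) := h.symm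
      _ = 0 := hγ0
  set β' : ↥F⟮γ⟯ := γ' ^ d - algebraMap F ↥F⟮γ⟯ α with hβ'
  have haevalf : aeval γ' f = β' := by
    rw [hfdef, hβ']
    simp
  have hβ'0 : aeval β' g = 0 := by
    rw [aeval_comp, haevalf] at hγ'0
    exact hγ'0
  have hβint : IsIntegral F β' := ⟨g, hgm, hβ'0⟩
  have hming : minpoly F β' = g := (minpoly.eq_of_irreducible_of_monic hgi hβ'0 hgm).symm
  haveI : FiniteDimensional F ↥F⟮β'⟯ := IntermediateField.adjoin.finiteDimensional hβint
  have hfinK : Module.finrank F ↥F⟮β'⟯ = g.natDegree := by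
    rw [IntermediateField.adjoin.finrank hβint, hming]
  set b0 : ↥F⟮β'⟯ := IntermediateField.AdjoinSimple.gen F β' with hb0def
  have hb0g : aeval b0 g = 0 := by
    rw [hb0def, ← hming]
    exact IntermediateField.aeval_gen_minpoly F β'
  have hIrr : Irreducible (X ^ (2 ^ m - 1) - C (b0 + algebraMap F ↥F⟮β'⟯ α) : (↥F⟮β'⟯)[X]) :=
    crux hm hF hp hα0 hα1 hgm hgi heval hb0g hfinK
  set c : ↥F⟮β'⟯ := b0 + algebraMap F ↥F⟮β'⟯ α with hc
  have hcoec : algebraMap ↥F⟮β'⟯ ↥F⟮γ⟯ c = γ' ^ d := by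
    rw [hc, map_add, hb0def, IntermediateField.AdjoinSimple.algebraMap_gen,
      ← IsScalarTower.algebraMap_apply F ↥F⟮β'⟯ ↥F⟮γ⟯, hβ']
    ring
  have hγ'K0 : aeval γ' (X ^ d - C c : (↥F⟮β'⟯)[X]) = 0 := by
    rw [map_sub, aeval_X_pow, aeval_C, hcoec, sub_self]
  have hγintK : IsIntegral ↥F⟮β'⟯ γ' := ⟨X ^ d - C c, monic_X_pow_sub_C c hd0, hγ'K0⟩
  have hminK : minpoly ↥F⟮β'⟯ γ' = X ^ d - C c :=
    (minpoly.eq_of_irreducible_of_monic hIrr hγ'K0 (monic_X_pow_sub_C c hd0)).symm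
  have hminγ' : minpoly F γ' = minpoly F γ := by
    have h := minpoly.algebraMap_eq (A := F) (algebraMap ↥F⟮γ⟯ Ω).injective γ'
    rw [hcoeγ] at h
    exact h.symm
  have hγ'int : IsIntegral F γ' := ⟨g.comp f, hcm, hγ'0⟩
  have hEtop : F⟮γ'⟯ = (⊤ : IntermediateField F ↥F⟮γ⟯) := by
    apply IntermediateField.eq_of_le_of_finrank_eq le_top
    rw [IntermediateField.adjoin.finrank hγ'int, hminγ', IntermediateField.finrank_top',
      IntermediateField.adjoin.finrank hγint]
  have hKtop : IntermediateField.adjoin ↥F⟮β'⟯ {γ'} = (⊤ : IntermediateField ↥F⟮β'⟯ ↥F⟮γ⟯) := by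
    rw [eq_top_iff]
    intro x _
    have hx : x ∈ F⟮γ'⟯ := by rw [hEtop]; trivial
    have hsub : F⟮γ'⟯ ≤
        IntermediateField.restrictScalars F (IntermediateField.adjoin ↥F⟮β'⟯ {γ'}) := by
      rw [IntermediateField.adjoin_le_iff]
      intro y hy
      rw [Set.mem_singleton_iff] at hy
      subst hy
      show γ' ∈ IntermediateField.restrictScalars F (IntermediateField.adjoin ↥F⟮β'⟯ {γ'})
      rw [IntermediateField.mem_restrictScalars]
      exact IntermediateField.mem_adjoin_simple_self ↥F⟮β'⟯ γ'
    have := hsub hx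
    rwa [IntermediateField.mem_restrictScalars] at this
  have hfinKE : Module.finrank ↥F⟮β'⟯ ↥F⟮γ⟯ = d := by
    rw [← IntermediateField.finrank_top' (F := ↥F⟮β'⟯) (E := ↥F⟮γ⟯), ← hKtop,
      IntermediateField.adjoin.finrank hγintK, hminK, natDegree_X_pow_sub_C]
  have htower : Module.finrank F ↥F⟮β'⟯ * Module.finrank ↥F⟮β'⟯ ↥F⟮γ⟯ =
      Module.finrank F ↥F⟮γ⟯ := Module.finrank_mul_finrank F ↥F⟮β'⟯ ↥F⟮γ⟯
  have hminγdeg : (minpoly F γ).natDegree = (g.comp f).natDegree := by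
    rw [hcd, ← IntermediateField.adjoin.finrank hγint, ← htower, hfinK, hfinKE]
  have hdvd : minpoly F γ ∣ g.comp f := minpoly.dvd F γ hγ0
  have heq : minpoly F γ = g.comp f := by
    apply eq_of_dvd_of_natDegree_le_of_leadingCoeff hdvd
    · rw [hminγdeg]
    · rw [(minpoly.monic hγint).leadingCoeff, hcm.leadingCoeff]
  rw [← heq]
  exact minpoly.irreducible hγint


lemma part2 {F : Type*} [Field F] [Fintype F] {m : ℕ} (hm : 2 ≤ m)
    (hF : Fintype.card F = 2 ^ m) :
    (∀ α : F, α ≠ 0 → α ≠ 1 → Irreducible (X ^ (2 ^ m - 1) - C α : F[X])) ↔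
      Nat.Prime (2 ^ m - 1) := by
  have h4 : 4 ≤ 2 ^ m := by
    calc (4 : ℕ) = 2 ^ 2 := rfl
    _ ≤ 2 ^ m := Nat.pow_le_pow_right (by norm_num) hm
  have hd3 : 3 ≤ 2 ^ m - 1 := by omega
  have hodd : Odd (2 ^ m - 1) := by
    refine Nat.Even.sub_odd (by omega) ?_ odd_one
    exact (Nat.even_pow' (by omega)).mpr even_two
  constructor
  · intro h
    by_contra hnp
    obtain ⟨ζ, hζ⟩ := IsCyclic.exists_generator (α := Fˣ)
    have hord : orderOf ζ = 2 ^ m - 1 := by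
      classical
      rw [orderOf_eq_card_of_forall_mem_zpowers hζ, Nat.card_eq_fintype_card, Fintype.card_units, hF]
    set p := (2 ^ m - 1).minFac with hp_def
    have hp : p.Prime := Nat.minFac_prime (by omega)
    have hpd : p ∣ 2 ^ m - 1 := Nat.minFac_dvd _
    have hpne : p ≠ 2 ^ m - 1 := fun h' => hnp (h' ▸ hp)
    have hplt : p < 2 ^ m - 1 := lt_of_le_of_ne (Nat.le_of_dvd (by omega) hpd) hpne
    set α : F := ((ζ ^ p : Fˣ) : F) with hα_def
    have hα0 : α ≠ 0 := Units.ne_zero _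
    have hα1 : α ≠ 1 := by
      intro h1
      have : (ζ : F) ^ p = 1 := by rw [← Units.val_pow_eq_pow_val]; exact h1
      have hu : ζ ^ p = 1 := by
        ext
        simpa using this
      have : orderOf ζ ∣ p := orderOf_dvd_of_pow_eq_one hu
      rw [hord] at this
      have := Nat.le_of_dvd hp.pos this
      omega
    have hirr := h α hα0 hα1
    rw [X_pow_sub_C_irreducible_iff_forall_prime_of_odd hodd] at hirr
    exact hirr p hp hpd (ζ : F) (by rw [← Units.val_pow_eq_pow_val])
  · intro hp α hα0 hα1
    apply X_pow_sub_C_irreducible_of_prime hp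
    intro b hb
    rcases eq_or_ne b 0 with rfl | hb0
    · rw [zero_pow (by omega)] at hb
      exact hα0 hb.symm
    · rw [show (2:ℕ) ^ m - 1 = Fintype.card F - 1 by rw [hF],
        FiniteField.pow_card_sub_one_eq_one b hb0] at hb
      exact hα1 hb.symm


end Aux


open Polynomial

/-- `iter f n` is the n-th iterate of `f` under composition, with `iter f 0 = X`. -/
noncomputable def iter {F : Type*} [Field F] (f : F[X]) : ℕ → F[X]
  | 0 => X
  | n + 1 => (iter f n).comp f

/-- `P d a n` is the value `P_n(a)` where `P_1(x) = x` and
`P_n(x) = P_{n-1}(x)^d + (-1)^(d-1) x` for `n ≥ 2`. (`P d a 0` is junk, set to `a`.) -/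
def P {F : Type*} [Field F] (d : ℕ) (a : F) : ℕ → F
  | 0 => a
  | 1 => a
  | n + 2 => (P d a (n + 1)) ^ d + (-1 : F) ^ (d - 1) * a

theorem stmt19 (m : ℕ) (hm : 2 ≤ m)
    (F : Type*) [Field F] [Fintype F] (hF : Fintype.card F = 2 ^ m) :
    ((∀ α : F, α ≠ 0 → α ≠ 1 →
        ∀ n : ℕ, 1 ≤ n → Irreducible (iter (X ^ (2 ^ m - 1) - C α : F[X]) n)) ↔
      (∀ α : F, α ≠ 0 → α ≠ 1 → Irreducible (X ^ (2 ^ m - 1) - C α : F[X])))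
    ∧ ((∀ α : F, α ≠ 0 → α ≠ 1 → Irreducible (X ^ (2 ^ m - 1) - C α : F[X])) ↔
        Nat.Prime (2 ^ m - 1)) := by
  have h4 : 4 ≤ 2 ^ m := by
    calc (4 : ℕ) = 2 ^ 2 := rfl
      _ ≤ 2 ^ m := Nat.pow_le_pow_right (by norm_num) hm
  have hd0 : (2 : ℕ) ^ m - 1 ≠ 0 := by omega
  have hpart2 := part2 (F := F) hm hF
  refine ⟨⟨fun h α h0 h1 => ?_, fun h2 α h0 h1 n hn => ?_⟩, hpart2⟩
  · have h1' := h α h0 h1 1 le_rfl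
    have : iter (X ^ (2 ^ m - 1) - C α : F[X]) 1 = X ^ (2 ^ m - 1) - C α := by
      simp [iter]
    rwa [this] at h1'
  · have hp : Nat.Prime (2 ^ m - 1) := hpart2.mp h2
    have hα1' : (1 : F) - α ≠ 0 := sub_ne_zero.mpr (Ne.symm h1)
    have hfm : (X ^ (2 ^ m - 1) - C α : F[X]).Monic := monic_X_pow_sub_C α hd0
    have hfdeg : (X ^ (2 ^ m - 1) - C α : F[X]).natDegree = 2 ^ m - 1 :=
      natDegree_X_pow_sub_C
    have hev : ∀ x : F, x ≠ 0 → (X ^ (2 ^ m - 1) - C α : F[X]).eval x = 1 - α := by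
      intro x hx
      rw [eval_sub, eval_pow, eval_X, eval_C,
        show (2 : ℕ) ^ m - 1 = Fintype.card F - 1 by rw [hF],
        FiniteField.pow_card_sub_one_eq_one x hx]
    have main : ∀ n : ℕ, 1 ≤ n →
        Irreducible (iter (X ^ (2 ^ m - 1) - C α : F[X]) n) ∧
        (iter (X ^ (2 ^ m - 1) - C α : F[X]) n).Monic ∧
        (iter (X ^ (2 ^ m - 1) - C α : F[X]) n).eval α = 1 - α ∧
        (iter (X ^ (2 ^ m - 1) - C α : F[X]) n).eval (1 - α) = 1 - α := by
      intro n hn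
      induction n, hn using Nat.le_induction with
      | base =>
        have h1eq : iter (X ^ (2 ^ m - 1) - C α : F[X]) 1 = X ^ (2 ^ m - 1) - C α := by
          simp [iter]
        rw [h1eq]
        exact ⟨h2 α h0 h1, hfm, hev α h0, hev _ hα1'⟩
      | succ n hn ih =>
        obtain ⟨hirr, hmon, hevα, hev1⟩ := ih
        have hne : (X ^ (2 ^ m - 1) - C α : F[X]).natDegree ≠ 0 := by
          rw [hfdeg]; exact hd0
        have hiter : iter (X ^ (2 ^ m - 1) - C α : F[X]) (n + 1) =
            (iter (X ^ (2 ^ m - 1) - C α : F[X]) n).comp (X ^ (2 ^ m - 1) - C α) := rfl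
        rw [hiter]
        refine ⟨step hm hF hp h0 h1 hmon hirr hevα, hmon.comp hfm hne, ?_, ?_⟩
        · rw [eval_comp, hev α h0, hev1]
        · rw [eval_comp, hev _ hα1', hev1]
    exact (main n hn).1
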